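/- For every k ∈ ℕ, the operator D_{(1,k)} : f ↦ (1/(1−z)^{k+1}) ⊙ f maps rational power series to rational power series, and is given by the differential operator ∑_{j=0}^{k} (C(k,j)/j!) zʲ (d/dz)ʲ. -/

import Mathlib

open PowerSeries Finset

noncomputable def hadamard (f g : PowerSeries ℂ) : PowerSeries ℂ :=
  PowerSeries.mk fun n => (PowerSeries.coeff n f) * (PowerSeries.coeff n g)

def IsRationalPS (f : PowerSeries ℂ) : Prop :=
  ∃ P Q : Polynomial ℂ, Q.coeff 0 ≠ 0 ∧ f * (Q : PowerSeries ℂ) = (P : PowerSeries ℂ)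

private lemma vander (n k : ℕ) :
    ∑ j ∈ range (k + 1), n.choose j * k.choose j = (n + k).choose k := by
  rw [Nat.add_choose_eq n k k, Finset.Nat.sum_antidiagonal_eq_sum_range_succ_mk]
  refine Finset.sum_congr rfl fun j hj => ?_
  rw [mem_range, Nat.lt_succ_iff] at hj
  rw [Nat.choose_symm hj]

private lemma coeff_inv_one_sub_pow (k n : ℕ) :
    PowerSeries.coeff n (((1 - X : PowerSeries ℂ) ^ (k + 1))⁻¹)
      = ((n + k).choose k : ℂ) := by
  have h1 : ((invOneSubPow ℂ (k + 1)).val : PowerSeries ℂ)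
      = ((1 - X : PowerSeries ℂ) ^ (k + 1))⁻¹ := by
    rw [PowerSeries.eq_inv_iff_mul_eq_one (by simp)]
    rw [← invOneSubPow_inv_eq_one_sub_pow]
    exact (invOneSubPow ℂ (k + 1)).val_inv
  rw [← h1, invOneSubPow_val_succ_eq_mk_add_choose, coeff_mk, Nat.add_comm k n]

private lemma coeff_iter_derivative (f : PowerSeries ℂ) (j m : ℕ) :
    PowerSeries.coeff m ((fun g => PowerSeries.derivative ℂ g)^[j] f)
      = ((m + j).descFactorial j : ℂ) * PowerSeries.coeff (m + j) f := by
  induction j generalizing f with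
  | zero => simp
  | succ j ih =>
    rw [Function.iterate_succ_apply]
    rw [ih (PowerSeries.derivative ℂ f), coeff_derivative,
      ← Nat.add_assoc, Nat.succ_descFactorial_succ]
    push_cast
    ring

private lemma part1 (k : ℕ) (f : PowerSeries ℂ) :
    hadamard (((1 - X : PowerSeries ℂ) ^ (k + 1))⁻¹) f
      = ∑ j ∈ range (k + 1),
          PowerSeries.C ((k.choose j : ℂ) / (j.factorial : ℂ)) *
            ((X : PowerSeries ℂ) ^ j * (fun g => PowerSeries.derivative ℂ g)^[j] f) := by
  ext n
  rw [map_sum]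
  simp only [hadamard, coeff_mk, coeff_inv_one_sub_pow]
  have key : ∀ j ∈ range (k + 1),
      PowerSeries.coeff n (PowerSeries.C ((k.choose j : ℂ) / (j.factorial : ℂ)) *
          ((X : PowerSeries ℂ) ^ j * (fun g => PowerSeries.derivative ℂ g)^[j] f))
        = (n.choose j : ℂ) * (k.choose j : ℂ) * PowerSeries.coeff n f := by
    intro j _
    rw [coeff_C_mul, coeff_X_pow_mul']
    by_cases h : j ≤ n
    · rw [if_pos h, coeff_iter_derivative, Nat.sub_add_cancel h,
        Nat.descFactorial_eq_factorial_mul_choose]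
      have hf : (j.factorial : ℂ) ≠ 0 := Nat.cast_ne_zero.mpr j.factorial_ne_zero
      push_cast
      field_simp
    · rw [if_neg h, Nat.choose_eq_zero_of_lt (not_le.mp h)]
      simp
  rw [Finset.sum_congr rfl key, ← Finset.sum_mul]
  congr 1
  exact_mod_cast (vander n k).symm

private lemma IsRationalPS.add' {f g : PowerSeries ℂ} (hf : IsRationalPS f)
    (hg : IsRationalPS g) : IsRationalPS (f + g) := by
  obtain ⟨P1, Q1, h1, e1⟩ := hf
  obtain ⟨P2, Q2, h2, e2⟩ := hg
  refine ⟨P1 * Q2 + P2 * Q1, Q1 * Q2, ?_, ?_⟩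
  · rw [Polynomial.mul_coeff_zero]; exact mul_ne_zero h1 h2
  · push_cast [Polynomial.coe_mul, Polynomial.coe_add]
    linear_combination (Q2 : PowerSeries ℂ) * e1 + (Q1 : PowerSeries ℂ) * e2

private lemma IsRationalPS.zero' : IsRationalPS (0 : PowerSeries ℂ) :=
  ⟨0, 1, by simp, by simp⟩

private lemma IsRationalPS.deriv' {f : PowerSeries ℂ} (hf : IsRationalPS f) :
    IsRationalPS (PowerSeries.derivative ℂ f) := by
  obtain ⟨P, Q, h, e⟩ := hf
  have hd := congrArg (PowerSeries.derivative ℂ) e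
  rw [Derivation.leibniz] at hd
  simp only [smul_eq_mul, PowerSeries.derivative_coe] at hd
  refine ⟨Polynomial.derivative P * Q - P * Polynomial.derivative Q, Q * Q, ?_, ?_⟩
  · rw [Polynomial.mul_coeff_zero]; exact mul_ne_zero h h
  · push_cast [Polynomial.coe_mul, Polynomial.coe_sub]
    linear_combination (Q : PowerSeries ℂ) * hd
      - ((Polynomial.derivative Q : Polynomial ℂ) : PowerSeries ℂ) * e

private lemma IsRationalPS.C_mul' (c : ℂ) {f : PowerSeries ℂ} (hf : IsRationalPS f) :
    IsRationalPS (PowerSeries.C c * f) := by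
  obtain ⟨P, Q, h, e⟩ := hf
  refine ⟨Polynomial.C c * P, Q, h, ?_⟩
  push_cast [Polynomial.coe_mul, Polynomial.coe_C]
  linear_combination (PowerSeries.C c) * e

private lemma IsRationalPS.X_pow_mul' (j : ℕ) {f : PowerSeries ℂ} (hf : IsRationalPS f) :
    IsRationalPS ((X : PowerSeries ℂ) ^ j * f) := by
  obtain ⟨P, Q, h, e⟩ := hf
  refine ⟨Polynomial.X ^ j * P, Q, h, ?_⟩
  push_cast [Polynomial.coe_mul, Polynomial.coe_pow, Polynomial.coe_X]
  linear_combination ((X : PowerSeries ℂ) ^ j) * e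

theorem diag_operator_preserves_rational (k : ℕ) :
    (∀ f : PowerSeries ℂ,
      hadamard (((1 - X : PowerSeries ℂ) ^ (k + 1))⁻¹) f
        = ∑ j ∈ range (k + 1),
            PowerSeries.C ((k.choose j : ℂ) / (j.factorial : ℂ)) *
              ((X : PowerSeries ℂ) ^ j * (fun g => PowerSeries.derivative ℂ g)^[j] f)) ∧
    (∀ f : PowerSeries ℂ, IsRationalPS f →
      IsRationalPS (hadamard (((1 - X : PowerSeries ℂ) ^ (k + 1))⁻¹) f)) := by
  refine ⟨part1 k, ?_⟩
  intro f hf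
  rw [part1 k f]
  have hiter : ∀ j : ℕ, IsRationalPS ((fun g => PowerSeries.derivative ℂ g)^[j] f) := by
    intro j
    induction j with
    | zero => simpa using hf
    | succ j ih =>
      rw [Function.iterate_succ_apply']
      exact ih.deriv'
  refine Finset.sum_induction _ IsRationalPS
    (fun a b ha hb => ha.add' hb) IsRationalPS.zero' ?_
  intro j _
  exact ((hiter j).X_pow_mul' j).C_mul' _
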